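/- Adding the edge {0, 1+α+α²} (i.e., {0, α^10}) to G creates an induced path on 6 vertices: in the modified graph, the vertices 1+α+α², 0, α+α³, α, α+α²+α³, α² form an induced P₆. -/
import Mathlib


open SimpleGraph

/-- The set of nonzero cubes in a field. -/
def cubes (F : Type) [Field F] : Set F := {s | ∃ x : F, x ≠ 0 ∧ x ^ 3 = s}

/-- The Cayley graph on `F` with connection set the nonzero cubes:
`x ~ y` iff `x - y` is a nonzero cube. -/
def cayley (F : Type) [Field F] : SimpleGraph F :=
  SimpleGraph.fromRel (fun x y => x - y ∈ cubes F)

/-- `v : Fin n → V` is an induced path on `n` vertices in `G`. -/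
def IsInducedPath {V : Type} (G : SimpleGraph V) {n : ℕ} (v : Fin n → V) : Prop :=
  Function.Injective v ∧
    ∀ i j : Fin n, G.Adj (v i) (v j) ↔ (i.val + 1 = j.val ∨ j.val + 1 = i.val)

set_option maxHeartbeats 4000000 in
theorem stmt10 (F : Type) [Field F] [Fintype F] (hF : Fintype.card F = 16)
    (a : F) (ha : a ^ 4 + a + 1 = 0) :
    IsInducedPath (cayley F ⊔ SimpleGraph.fromEdgeSet {s((0 : F), 1 + a + a ^ 2)})
      ![1 + a + a ^ 2, 0, a + a ^ 3, a, a + a ^ 2 + a ^ 3, a ^ 2] := by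
  have h16 : (16 : F) = 0 := by
    have := FiniteField.cast_card_eq_zero F
    rw [hF] at this; exact_mod_cast this
  have h2 : (2 : F) = 0 := by
    have h4 : (2 : F) ^ 4 = 0 := by linear_combination h16
    exact pow_eq_zero_iff (by norm_num) |>.mp h4
  have hcube : ∀ x : F, x ∈ cubes F ↔ x ^ 5 = 1 := by
    intro x
    constructor
    · rintro ⟨y, hy0, rfl⟩
      have h15 : y ^ 15 = 1 := by
        have := FiniteField.pow_card_sub_one_eq_one y hy0
        rw [hF] at this; exact_mod_cast this
      calc (y ^ 3) ^ 5 = y ^ 15 := by ring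
        _ = 1 := h15
    · intro hx
      have hx0 : x ≠ 0 := by intro h; rw [h] at hx; simp at hx
      exact ⟨x ^ 2, pow_ne_zero _ hx0, by
        calc (x ^ 2) ^ 3 = x * x ^ 5 := by ring
          _ = x := by rw [hx, mul_one]⟩
  have hadj : ∀ x y : F,
      (cayley F ⊔ SimpleGraph.fromEdgeSet {s((0 : F), 1 + a + a ^ 2)}).Adj x y ↔
      (x ≠ y ∧ ((x - y) ^ 5 = 1 ∨ (x = 0 ∧ y = 1 + a + a ^ 2) ∨
        (x = 1 + a + a ^ 2 ∧ y = 0))) := by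
    intro x y
    have hyx : y - x = x - y := by linear_combination (y - x) * h2
    simp only [SimpleGraph.sup_adj, cayley, SimpleGraph.fromRel_adj, SimpleGraph.fromEdgeSet_adj,
      Set.mem_singleton_iff, Sym2.eq, Sym2.rel_iff', Prod.mk.injEq, Prod.swap_prod_mk,
      hcube, hyx]
    tauto
  have ne01 : (1 + a + a ^ 2 : F) ≠ (0) := fun h => one_ne_zero (α := F) (by linear_combination (a + a ^ 2) * h + ((1:F)) * ha + ((-1:F) * a + (-1:F) * a ^ 2 + (-1:F) * a ^ 3 + (-1:F) * a ^ 4) * h2)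
  have ne02 : (1 + a + a ^ 2 : F) ≠ (a + a ^ 3) := fun h => one_ne_zero (α := F) (by linear_combination (a ^ 2) * h + ((1:F) + a) * ha + ((-1:F) * a + (-1:F) * a ^ 2 + (-1:F) * a ^ 4) * h2)
  have ne03 : (1 + a + a ^ 2 : F) ≠ (a) := fun h => one_ne_zero (α := F) (by linear_combination ((1:F) + a + a ^ 3) * h + (a) * ha + ((-1:F) * a + (-1:F) * a ^ 2 + (-1:F) * a ^ 3 + (-1:F) * a ^ 5) * h2)
  have ne04 : (1 + a + a ^ 2 : F) ≠ (a + a ^ 2 + a ^ 3) := fun h => one_ne_zero (α := F) (by linear_combination (a) * h + ((1:F)) * ha + ((-1:F) * a) * h2)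
  have ne05 : (1 + a + a ^ 2 : F) ≠ (a ^ 2) := fun h => one_ne_zero (α := F) (by linear_combination (a + a ^ 2 + a ^ 3) * h + ((1:F)) * ha + ((-1:F) * a + (-1:F) * a ^ 2 + (-1:F) * a ^ 3 + (-1:F) * a ^ 4) * h2)
  have ne10 : (0 : F) ≠ (1 + a + a ^ 2) := fun h => one_ne_zero (α := F) (by linear_combination (a + a ^ 2) * h + ((1:F)) * ha + (a ^ 2 + a ^ 3) * h2)
  have ne12 : (0 : F) ≠ (a + a ^ 3) := fun h => one_ne_zero (α := F) (by linear_combination (a ^ 2 + a ^ 3) * h + ((1:F) + a + a ^ 2) * ha + ((-1:F) * a + (-1:F) * a ^ 2) * h2)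
  have ne13 : (0 : F) ≠ (a) := fun h => one_ne_zero (α := F) (by linear_combination ((1:F) + a ^ 3) * h + ((1:F)) * ha + (0) * h2)
  have ne14 : (0 : F) ≠ (a + a ^ 2 + a ^ 3) := fun h => one_ne_zero (α := F) (by linear_combination ((1:F) + a) * h + ((1:F)) * ha + (a ^ 2 + a ^ 3) * h2)
  have ne15 : (0 : F) ≠ (a ^ 2) := fun h => one_ne_zero (α := F) (by linear_combination ((1:F) + a ^ 2 + a ^ 3) * h + ((1:F) + a) * ha + ((-1:F) * a) * h2)
  have ne20 : (a + a ^ 3 : F) ≠ (1 + a + a ^ 2) := fun h => one_ne_zero (α := F) (by linear_combination (a ^ 2) * h + ((1:F) + a) * ha + ((-1:F) * a + (-1:F) * a ^ 5) * h2)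
  have ne21 : (a + a ^ 3 : F) ≠ (0) := fun h => one_ne_zero (α := F) (by linear_combination (a ^ 2 + a ^ 3) * h + ((1:F) + a + a ^ 2) * ha + ((-1:F) * a + (-1:F) * a ^ 2 + (-1:F) * a ^ 3 + (-1:F) * a ^ 4 + (-1:F) * a ^ 5 + (-1:F) * a ^ 6) * h2)
  have ne23 : (a + a ^ 3 : F) ≠ (a) := fun h => one_ne_zero (α := F) (by linear_combination ((1:F) + a + a ^ 2 + a ^ 3) * h + ((1:F) + a + a ^ 2) * ha + ((-1:F) * a + (-1:F) * a ^ 2 + (-1:F) * a ^ 3 + (-1:F) * a ^ 4 + (-1:F) * a ^ 5 + (-1:F) * a ^ 6) * h2)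
  have ne24 : (a + a ^ 3 : F) ≠ (a + a ^ 2 + a ^ 3) := fun h => one_ne_zero (α := F) (by linear_combination ((1:F) + a ^ 2 + a ^ 3) * h + ((1:F) + a) * ha + ((-1:F) * a) * h2)
  have ne25 : (a + a ^ 3 : F) ≠ (a ^ 2) := fun h => one_ne_zero (α := F) (by linear_combination ((1:F) + a) * h + ((1:F)) * ha + ((-1:F) * a + (-1:F) * a ^ 4) * h2)
  have ne30 : (a : F) ≠ (1 + a + a ^ 2) := fun h => one_ne_zero (α := F) (by linear_combination ((1:F) + a + a ^ 3) * h + (a) * ha + ((1:F) + a ^ 3) * h2)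
  have ne31 : (a : F) ≠ (0) := fun h => one_ne_zero (α := F) (by linear_combination ((1:F) + a ^ 3) * h + ((1:F)) * ha + ((-1:F) * a + (-1:F) * a ^ 4) * h2)
  have ne32 : (a : F) ≠ (a + a ^ 3) := fun h => one_ne_zero (α := F) (by linear_combination ((1:F) + a + a ^ 2 + a ^ 3) * h + ((1:F) + a + a ^ 2) * ha + ((-1:F) * a + (-1:F) * a ^ 2) * h2)
  have ne34 : (a : F) ≠ (a + a ^ 2 + a ^ 3) := fun h => one_ne_zero (α := F) (by linear_combination (a + a ^ 3) * h + ((1:F) + a + a ^ 2) * ha + ((-1:F) * a + (-1:F) * a ^ 2) * h2)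
  have ne35 : (a : F) ≠ (a ^ 2) := fun h => one_ne_zero (α := F) (by linear_combination ((1:F) + a + a ^ 2) * h + ((1:F)) * ha + ((-1:F) * a) * h2)
  have ne40 : (a + a ^ 2 + a ^ 3 : F) ≠ (1 + a + a ^ 2) := fun h => one_ne_zero (α := F) (by linear_combination (a) * h + ((1:F)) * ha + ((-1:F) * a ^ 4) * h2)
  have ne41 : (a + a ^ 2 + a ^ 3 : F) ≠ (0) := fun h => one_ne_zero (α := F) (by linear_combination ((1:F) + a) * h + ((1:F)) * ha + ((-1:F) * a + (-1:F) * a ^ 2 + (-1:F) * a ^ 3 + (-1:F) * a ^ 4) * h2)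
  have ne42 : (a + a ^ 2 + a ^ 3 : F) ≠ (a + a ^ 3) := fun h => one_ne_zero (α := F) (by linear_combination ((1:F) + a ^ 2 + a ^ 3) * h + ((1:F) + a) * ha + ((-1:F) * a + (-1:F) * a ^ 2 + (-1:F) * a ^ 4 + (-1:F) * a ^ 5) * h2)
  have ne43 : (a + a ^ 2 + a ^ 3 : F) ≠ (a) := fun h => one_ne_zero (α := F) (by linear_combination (a + a ^ 3) * h + ((1:F) + a + a ^ 2) * ha + ((-1:F) * a + (-1:F) * a ^ 2 + (-1:F) * a ^ 3 + (-1:F) * a ^ 4 + (-1:F) * a ^ 5 + (-1:F) * a ^ 6) * h2)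
  have ne45 : (a + a ^ 2 + a ^ 3 : F) ≠ (a ^ 2) := fun h => one_ne_zero (α := F) (by linear_combination (a ^ 2 + a ^ 3) * h + ((1:F) + a + a ^ 2) * ha + ((-1:F) * a + (-1:F) * a ^ 2 + (-1:F) * a ^ 3 + (-1:F) * a ^ 4 + (-1:F) * a ^ 5 + (-1:F) * a ^ 6) * h2)
  have ne50 : (a ^ 2 : F) ≠ (1 + a + a ^ 2) := fun h => one_ne_zero (α := F) (by linear_combination (a + a ^ 2 + a ^ 3) * h + ((1:F)) * ha + (a ^ 2 + a ^ 3) * h2)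
  have ne51 : (a ^ 2 : F) ≠ (0) := fun h => one_ne_zero (α := F) (by linear_combination ((1:F) + a ^ 2 + a ^ 3) * h + ((1:F) + a) * ha + ((-1:F) * a + (-1:F) * a ^ 2 + (-1:F) * a ^ 4 + (-1:F) * a ^ 5) * h2)
  have ne52 : (a ^ 2 : F) ≠ (a + a ^ 3) := fun h => one_ne_zero (α := F) (by linear_combination ((1:F) + a) * h + ((1:F)) * ha + (0) * h2)
  have ne53 : (a ^ 2 : F) ≠ (a) := fun h => one_ne_zero (α := F) (by linear_combination ((1:F) + a + a ^ 2) * h + ((1:F)) * ha + ((-1:F) * a ^ 4) * h2)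
  have ne54 : (a ^ 2 : F) ≠ (a + a ^ 2 + a ^ 3) := fun h => one_ne_zero (α := F) (by linear_combination (a ^ 2 + a ^ 3) * h + ((1:F) + a + a ^ 2) * ha + ((-1:F) * a + (-1:F) * a ^ 2) * h2)
  have cube12 : ((0 : F) - (a + a ^ 3)) ^ 5 = 1 := by linear_combination ((-7:F) + (-3:F) * a + a ^ 2 + (-1:F) * a ^ 3 + (8:F) * a ^ 4 + (-6:F) * a ^ 5 + (5:F) * a ^ 6 + (-9:F) * a ^ 7 + a ^ 8 + (-5:F) * a ^ 9 + (-1:F) * a ^ 11) * ha + ((3:F) + (5:F) * a + a ^ 2) * h2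
  have cube23 : ((a + a ^ 3 : F) - (a)) ^ 5 = 1 := by linear_combination ((-3:F) + (-3:F) * a + (-1:F) * a ^ 2 + a ^ 3 + (2:F) * a ^ 4 + a ^ 5 + (-1:F) * a ^ 7 + (-1:F) * a ^ 8 + a ^ 11) * ha + ((1:F) + (3:F) * a + (2:F) * a ^ 2) * h2
  have cube34 : ((a : F) - (a + a ^ 2 + a ^ 3)) ^ 5 = 1 := by linear_combination ((7:F) + (-27:F) * a + (-33:F) * a ^ 2 + (-15:F) * a ^ 3 + (8:F) * a ^ 4 + (19:F) * a ^ 5 + (14:F) * a ^ 6 + a ^ 7 + (-9:F) * a ^ 8 + (-10:F) * a ^ 9 + (-5:F) * a ^ 10 + (-1:F) * a ^ 11) * ha + ((-4:F) + (10:F) * a + (30:F) * a ^ 2 + (24:F) * a ^ 3) * h2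
  have cube45 : ((a + a ^ 2 + a ^ 3 : F) - (a ^ 2)) ^ 5 = 1 := by linear_combination ((7:F) + (3:F) * a + (-1:F) * a ^ 2 + a ^ 3 + (-8:F) * a ^ 4 + (6:F) * a ^ 5 + (-5:F) * a ^ 6 + (9:F) * a ^ 7 + (-1:F) * a ^ 8 + (5:F) * a ^ 9 + a ^ 11) * ha + ((-4:F) + (-5:F) * a + (-1:F) * a ^ 2) * h2
  have cube21 : ((a + a ^ 3 : F) - (0)) ^ 5 = 1 := by linear_combination ((7:F) + (3:F) * a + (-1:F) * a ^ 2 + a ^ 3 + (-8:F) * a ^ 4 + (6:F) * a ^ 5 + (-5:F) * a ^ 6 + (9:F) * a ^ 7 + (-1:F) * a ^ 8 + (5:F) * a ^ 9 + a ^ 11) * ha + ((-4:F) + (-5:F) * a + (-1:F) * a ^ 2) * h2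
  have cube32 : ((a : F) - (a + a ^ 3)) ^ 5 = 1 := by linear_combination ((3:F) + (3:F) * a + a ^ 2 + (-1:F) * a ^ 3 + (-2:F) * a ^ 4 + (-1:F) * a ^ 5 + a ^ 7 + a ^ 8 + (-1:F) * a ^ 11) * ha + ((-2:F) + (-3:F) * a + (-2:F) * a ^ 2) * h2
  have cube43 : ((a + a ^ 2 + a ^ 3 : F) - (a)) ^ 5 = 1 := by linear_combination ((-7:F) + (27:F) * a + (33:F) * a ^ 2 + (15:F) * a ^ 3 + (-8:F) * a ^ 4 + (-19:F) * a ^ 5 + (-14:F) * a ^ 6 + (-1:F) * a ^ 7 + (9:F) * a ^ 8 + (10:F) * a ^ 9 + (5:F) * a ^ 10 + a ^ 11) * ha + ((3:F) + (-10:F) * a + (-30:F) * a ^ 2 + (-24:F) * a ^ 3) * h2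
  have cube54 : ((a ^ 2 : F) - (a + a ^ 2 + a ^ 3)) ^ 5 = 1 := by linear_combination ((-7:F) + (-3:F) * a + a ^ 2 + (-1:F) * a ^ 3 + (8:F) * a ^ 4 + (-6:F) * a ^ 5 + (5:F) * a ^ 6 + (-9:F) * a ^ 7 + a ^ 8 + (-5:F) * a ^ 9 + (-1:F) * a ^ 11) * ha + ((3:F) + (5:F) * a + a ^ 2) * h2
  have nc02 : ((1 + a + a ^ 2 : F) - (a + a ^ 3)) ^ 5 ≠ 1 := fun h => one_ne_zero (α := F) (by linear_combination (a + a ^ 2) * h + ((1:F) + a + a ^ 2 + a ^ 4 + a ^ 5 + a ^ 8 + a ^ 9 + a ^ 11 + a ^ 13) * ha + ((-1:F) * a + (-1:F) * a ^ 2 + (-3:F) * a ^ 3 + (-1:F) * a ^ 4 + (-4:F) * a ^ 5 + (4:F) * a ^ 6 + (4:F) * a ^ 8 + (-4:F) * a ^ 9 + (-3:F) * a ^ 10 + (-1:F) * a ^ 11 + (-4:F) * a ^ 12 + (4:F) * a ^ 13 + (-3:F) * a ^ 14 + (2:F) * a ^ 15 + (-2:F) * a ^ 16) * h2)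
  have nc03 : ((1 + a + a ^ 2 : F) - (a)) ^ 5 ≠ 1 := fun h => one_ne_zero (α := F) (by linear_combination ((1:F) + a + a ^ 2) * h + ((1:F) + a + a ^ 3 + a ^ 4 + a ^ 7 + a ^ 8) * ha + ((-1:F) * a + (-3:F) * a ^ 2 + (-3:F) * a ^ 3 + (-9:F) * a ^ 4 + (-6:F) * a ^ 5 + (-10:F) * a ^ 6 + (-6:F) * a ^ 7 + (-9:F) * a ^ 8 + (-3:F) * a ^ 9 + (-3:F) * a ^ 10 + (-1:F) * a ^ 11 + (-1:F) * a ^ 12) * h2)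
  have nc04 : ((1 + a + a ^ 2 : F) - (a + a ^ 2 + a ^ 3)) ^ 5 ≠ 1 := fun h => one_ne_zero (α := F) (by linear_combination ((1:F) + a + a ^ 2) * h + ((1:F) + a + a ^ 2 + a ^ 6 + a ^ 7 + a ^ 8 + a ^ 9 + a ^ 11 + a ^ 12 + a ^ 13) * ha + ((-1:F) * a + (-1:F) * a ^ 2 + (2:F) * a ^ 3 + (2:F) * a ^ 4 + (2:F) * a ^ 5 + (-6:F) * a ^ 6 + (-6:F) * a ^ 7 + (-6:F) * a ^ 8 + (4:F) * a ^ 9 + (4:F) * a ^ 10 + (4:F) * a ^ 11 + (-4:F) * a ^ 12 + (-4:F) * a ^ 13 + (-3:F) * a ^ 14) * h2)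
  have nc05 : ((1 + a + a ^ 2 : F) - (a ^ 2)) ^ 5 ≠ 1 := fun h => one_ne_zero (α := F) (by linear_combination (a + a ^ 2) * h + ((1:F) + a + a ^ 3) * ha + ((-1:F) * a + (-3:F) * a ^ 2 + (-8:F) * a ^ 3 + (-11:F) * a ^ 4 + (-8:F) * a ^ 5 + (-3:F) * a ^ 6 + (-1:F) * a ^ 7) * h2)
  have nc13 : ((0 : F) - (a)) ^ 5 ≠ 1 := fun h => one_ne_zero (α := F) (by linear_combination (a + a ^ 2) * h + ((1:F) + a ^ 2 + a ^ 3) * ha + ((-1:F) * a ^ 3 + (-1:F) * a ^ 4) * h2)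
  have nc14 : ((0 : F) - (a + a ^ 2 + a ^ 3)) ^ 5 ≠ 1 := fun h => one_ne_zero (α := F) (by linear_combination ((1:F) + a + a ^ 2) * h + (a + a ^ 7 + a ^ 8 + a ^ 9 + a ^ 10 + a ^ 11 + a ^ 13) * ha + ((1:F) + (3:F) * a ^ 6 + (10:F) * a ^ 7 + (24:F) * a ^ 8 + (44:F) * a ^ 9 + (62:F) * a ^ 10 + (69:F) * a ^ 11 + (62:F) * a ^ 12 + (44:F) * a ^ 13 + (24:F) * a ^ 14 + (10:F) * a ^ 15 + (3:F) * a ^ 16) * h2)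
  have nc15 : ((0 : F) - (a ^ 2)) ^ 5 ≠ 1 := fun h => one_ne_zero (α := F) (by linear_combination ((1:F) + a + a ^ 2) * h + (a + a ^ 5 + a ^ 6 + a ^ 7 + a ^ 8) * ha + ((1:F) + (-1:F) * a ^ 5 + (-1:F) * a ^ 6 + (-1:F) * a ^ 7 + (-1:F) * a ^ 8 + (-1:F) * a ^ 9) * h2)
  have nc20 : ((a + a ^ 3 : F) - (1 + a + a ^ 2)) ^ 5 ≠ 1 := fun h => one_ne_zero (α := F) (by linear_combination (a + a ^ 2) * h + ((1:F) + a + a ^ 2 + a ^ 4 + a ^ 5 + a ^ 8 + a ^ 9 + a ^ 11 + a ^ 13) * ha + ((2:F) * a ^ 3 + (-1:F) * a ^ 4 + a ^ 5 + (-6:F) * a ^ 6 + (-6:F) * a ^ 8 + a ^ 9 + (2:F) * a ^ 10 + (2:F) * a ^ 12 + (-6:F) * a ^ 13 + (2:F) * a ^ 14 + (-3:F) * a ^ 15 + (2:F) * a ^ 16 + (-1:F) * a ^ 17) * h2)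
  have nc24 : ((a + a ^ 3 : F) - (a + a ^ 2 + a ^ 3)) ^ 5 ≠ 1 := fun h => one_ne_zero (α := F) (by linear_combination ((1:F) + a + a ^ 2) * h + (a + a ^ 5 + a ^ 6 + a ^ 7 + a ^ 8) * ha + ((1:F) + (-1:F) * a ^ 5 + (-1:F) * a ^ 6 + (-1:F) * a ^ 7 + (-1:F) * a ^ 8 + (-1:F) * a ^ 9) * h2)
  have nc25 : ((a + a ^ 3 : F) - (a ^ 2)) ^ 5 ≠ 1 := fun h => one_ne_zero (α := F) (by linear_combination ((1:F) + a + a ^ 2) * h + (a + a ^ 7 + a ^ 8 + a ^ 9 + a ^ 10 + a ^ 11 + a ^ 13) * ha + ((1:F) + (-1:F) * a ^ 5 + (2:F) * a ^ 6 + (-6:F) * a ^ 7 + (9:F) * a ^ 8 + (-16:F) * a ^ 9 + (17:F) * a ^ 10 + (-21:F) * a ^ 11 + (17:F) * a ^ 12 + (-16:F) * a ^ 13 + (9:F) * a ^ 14 + (-6:F) * a ^ 15 + (2:F) * a ^ 16 + (-1:F) * a ^ 17) * h2)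
  have nc30 : ((a : F) - (1 + a + a ^ 2)) ^ 5 ≠ 1 := fun h => one_ne_zero (α := F) (by linear_combination ((1:F) + a + a ^ 2) * h + ((1:F) + a + a ^ 3 + a ^ 4 + a ^ 7 + a ^ 8) * ha + ((1:F) + (3:F) * a ^ 2 + (2:F) * a ^ 3 + (6:F) * a ^ 4 + (4:F) * a ^ 5 + (10:F) * a ^ 6 + (4:F) * a ^ 7 + (6:F) * a ^ 8 + (2:F) * a ^ 9 + (3:F) * a ^ 10) * h2)
  have nc31 : ((a : F) - (0)) ^ 5 ≠ 1 := fun h => one_ne_zero (α := F) (by linear_combination (a + a ^ 2) * h + ((1:F) + a ^ 2 + a ^ 3) * ha + ((-1:F) * a ^ 3 + (-1:F) * a ^ 4 + (-1:F) * a ^ 6 + (-1:F) * a ^ 7) * h2)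
  have nc35 : ((a : F) - (a ^ 2)) ^ 5 ≠ 1 := fun h => one_ne_zero (α := F) (by linear_combination ((1:F) + a + a ^ 2) * h + (a + a ^ 8) * ha + ((1:F) + (-1:F) * a ^ 5 + (2:F) * a ^ 6 + (-3:F) * a ^ 7 + (2:F) * a ^ 8 + (-3:F) * a ^ 9 + (3:F) * a ^ 10 + (-2:F) * a ^ 11) * h2)
  have nc40 : ((a + a ^ 2 + a ^ 3 : F) - (1 + a + a ^ 2)) ^ 5 ≠ 1 := fun h => one_ne_zero (α := F) (by linear_combination ((1:F) + a + a ^ 2) * h + ((1:F) + a + a ^ 2 + a ^ 6 + a ^ 7 + a ^ 8 + a ^ 9 + a ^ 11 + a ^ 12 + a ^ 13) * ha + ((1:F) + (-3:F) * a ^ 3 + (-3:F) * a ^ 4 + (-3:F) * a ^ 5 + (4:F) * a ^ 6 + (4:F) * a ^ 7 + (4:F) * a ^ 8 + (-6:F) * a ^ 9 + (-6:F) * a ^ 10 + (-6:F) * a ^ 11 + a ^ 12 + a ^ 13 + (2:F) * a ^ 14 + (-1:F) * a ^ 15 + (-1:F) * a ^ 16 + (-1:F) * a ^ 17) * h2)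
  have nc41 : ((a + a ^ 2 + a ^ 3 : F) - (0)) ^ 5 ≠ 1 := fun h => one_ne_zero (α := F) (by linear_combination ((1:F) + a + a ^ 2) * h + (a + a ^ 7 + a ^ 8 + a ^ 9 + a ^ 10 + a ^ 11 + a ^ 13) * ha + ((1:F) + (-1:F) * a ^ 5 + (-3:F) * a ^ 6 + (-11:F) * a ^ 7 + (-26:F) * a ^ 8 + (-46:F) * a ^ 9 + (-64:F) * a ^ 10 + (-72:F) * a ^ 11 + (-64:F) * a ^ 12 + (-46:F) * a ^ 13 + (-26:F) * a ^ 14 + (-11:F) * a ^ 15 + (-3:F) * a ^ 16 + (-1:F) * a ^ 17) * h2)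
  have nc42 : ((a + a ^ 2 + a ^ 3 : F) - (a + a ^ 3)) ^ 5 ≠ 1 := fun h => one_ne_zero (α := F) (by linear_combination ((1:F) + a + a ^ 2) * h + (a + a ^ 5 + a ^ 6 + a ^ 7 + a ^ 8) * ha + ((1:F) + (-1:F) * a ^ 5 + (-1:F) * a ^ 6 + (-1:F) * a ^ 7 + (-1:F) * a ^ 8 + (-1:F) * a ^ 9 + (-1:F) * a ^ 10 + (-1:F) * a ^ 11 + (-1:F) * a ^ 12) * h2)
  have nc50 : ((a ^ 2 : F) - (1 + a + a ^ 2)) ^ 5 ≠ 1 := fun h => one_ne_zero (α := F) (by linear_combination (a + a ^ 2) * h + ((1:F) + a + a ^ 3) * ha + ((3:F) * a ^ 2 + (7:F) * a ^ 3 + (9:F) * a ^ 4 + (7:F) * a ^ 5 + (3:F) * a ^ 6) * h2)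
  have nc51 : ((a ^ 2 : F) - (0)) ^ 5 ≠ 1 := fun h => one_ne_zero (α := F) (by linear_combination ((1:F) + a + a ^ 2) * h + (a + a ^ 5 + a ^ 6 + a ^ 7 + a ^ 8) * ha + ((1:F) + (-1:F) * a ^ 5 + (-1:F) * a ^ 6 + (-1:F) * a ^ 7 + (-1:F) * a ^ 8 + (-1:F) * a ^ 9 + (-1:F) * a ^ 10 + (-1:F) * a ^ 11 + (-1:F) * a ^ 12) * h2)
  have nc52 : ((a ^ 2 : F) - (a + a ^ 3)) ^ 5 ≠ 1 := fun h => one_ne_zero (α := F) (by linear_combination ((1:F) + a + a ^ 2) * h + (a + a ^ 7 + a ^ 8 + a ^ 9 + a ^ 10 + a ^ 11 + a ^ 13) * ha + ((1:F) + (-2:F) * a ^ 6 + (5:F) * a ^ 7 + (-11:F) * a ^ 8 + (14:F) * a ^ 9 + (-19:F) * a ^ 10 + (18:F) * a ^ 11 + (-19:F) * a ^ 12 + (14:F) * a ^ 13 + (-11:F) * a ^ 14 + (5:F) * a ^ 15 + (-2:F) * a ^ 16) * h2)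
  have nc53 : ((a ^ 2 : F) - (a)) ^ 5 ≠ 1 := fun h => one_ne_zero (α := F) (by linear_combination ((1:F) + a + a ^ 2) * h + (a + a ^ 8) * ha + ((1:F) + (-2:F) * a ^ 6 + (3:F) * a ^ 7 + (-3:F) * a ^ 8 + (2:F) * a ^ 9 + (-3:F) * a ^ 10 + (2:F) * a ^ 11 + (-1:F) * a ^ 12) * h2)
  constructor
  · intro i j hij
    fin_cases i <;> fin_cases j
    · rfl
    · exact absurd hij ne01
    · exact absurd hij ne02
    · exact absurd hij ne03
    · exact absurd hij ne04
    · exact absurd hij ne05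
    · exact absurd hij ne10
    · rfl
    · exact absurd hij ne12
    · exact absurd hij ne13
    · exact absurd hij ne14
    · exact absurd hij ne15
    · exact absurd hij ne20
    · exact absurd hij ne21
    · rfl
    · exact absurd hij ne23
    · exact absurd hij ne24
    · exact absurd hij ne25
    · exact absurd hij ne30
    · exact absurd hij ne31
    · exact absurd hij ne32
    · rfl
    · exact absurd hij ne34
    · exact absurd hij ne35
    · exact absurd hij ne40
    · exact absurd hij ne41
    · exact absurd hij ne42
    · exact absurd hij ne43
    · rfl
    · exact absurd hij ne45
    · exact absurd hij ne50
    · exact absurd hij ne51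
    · exact absurd hij ne52
    · exact absurd hij ne53
    · exact absurd hij ne54
    · rfl
  · intro i j
    fin_cases i <;> fin_cases j
    · exact iff_of_false (fun hA => ((hadj _ _).mp hA).1 rfl) (by decide)
    · exact iff_of_true ((hadj _ _).mpr ⟨ne01, Or.inr (Or.inr ⟨rfl, rfl⟩)⟩) (by decide)
    · refine iff_of_false (fun hA => ?_) (by decide)
      obtain ⟨hne, h | ⟨h1, h2'⟩ | ⟨h1, h2'⟩⟩ := (hadj _ _).mp hA
      · exact nc02 h
      · exact ne01 h1
      · exact ne12 h2'.symm
    · refine iff_of_false (fun hA => ?_) (by decide)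
      obtain ⟨hne, h | ⟨h1, h2'⟩ | ⟨h1, h2'⟩⟩ := (hadj _ _).mp hA
      · exact nc03 h
      · exact ne01 h1
      · exact ne13 h2'.symm
    · refine iff_of_false (fun hA => ?_) (by decide)
      obtain ⟨hne, h | ⟨h1, h2'⟩ | ⟨h1, h2'⟩⟩ := (hadj _ _).mp hA
      · exact nc04 h
      · exact ne01 h1
      · exact ne14 h2'.symm
    · refine iff_of_false (fun hA => ?_) (by decide)
      obtain ⟨hne, h | ⟨h1, h2'⟩ | ⟨h1, h2'⟩⟩ := (hadj _ _).mp hA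
      · exact nc05 h
      · exact ne01 h1
      · exact ne15 h2'.symm
    · exact iff_of_true ((hadj _ _).mpr ⟨ne10, Or.inr (Or.inl ⟨rfl, rfl⟩)⟩) (by decide)
    · exact iff_of_false (fun hA => ((hadj _ _).mp hA).1 rfl) (by decide)
    · exact iff_of_true ((hadj _ _).mpr ⟨ne12, Or.inl cube12⟩) (by decide)
    · refine iff_of_false (fun hA => ?_) (by decide)
      obtain ⟨hne, h | ⟨h1, h2'⟩ | ⟨h1, h2'⟩⟩ := (hadj _ _).mp hA
      · exact nc13 h
      · exact ne03 h2'.symm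
      · exact ne10 h1
    · refine iff_of_false (fun hA => ?_) (by decide)
      obtain ⟨hne, h | ⟨h1, h2'⟩ | ⟨h1, h2'⟩⟩ := (hadj _ _).mp hA
      · exact nc14 h
      · exact ne04 h2'.symm
      · exact ne10 h1
    · refine iff_of_false (fun hA => ?_) (by decide)
      obtain ⟨hne, h | ⟨h1, h2'⟩ | ⟨h1, h2'⟩⟩ := (hadj _ _).mp hA
      · exact nc15 h
      · exact ne05 h2'.symm
      · exact ne10 h1
    · refine iff_of_false (fun hA => ?_) (by decide)
      obtain ⟨hne, h | ⟨h1, h2'⟩ | ⟨h1, h2'⟩⟩ := (hadj _ _).mp hA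
      · exact nc20 h
      · exact ne21 h1
      · exact ne20 h1
    · exact iff_of_true ((hadj _ _).mpr ⟨ne21, Or.inl cube21⟩) (by decide)
    · exact iff_of_false (fun hA => ((hadj _ _).mp hA).1 rfl) (by decide)
    · exact iff_of_true ((hadj _ _).mpr ⟨ne23, Or.inl cube23⟩) (by decide)
    · refine iff_of_false (fun hA => ?_) (by decide)
      obtain ⟨hne, h | ⟨h1, h2'⟩ | ⟨h1, h2'⟩⟩ := (hadj _ _).mp hA
      · exact nc24 h
      · exact ne21 h1
      · exact ne20 h1
    · refine iff_of_false (fun hA => ?_) (by decide)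
      obtain ⟨hne, h | ⟨h1, h2'⟩ | ⟨h1, h2'⟩⟩ := (hadj _ _).mp hA
      · exact nc25 h
      · exact ne21 h1
      · exact ne20 h1
    · refine iff_of_false (fun hA => ?_) (by decide)
      obtain ⟨hne, h | ⟨h1, h2'⟩ | ⟨h1, h2'⟩⟩ := (hadj _ _).mp hA
      · exact nc30 h
      · exact ne31 h1
      · exact ne30 h1
    · refine iff_of_false (fun hA => ?_) (by decide)
      obtain ⟨hne, h | ⟨h1, h2'⟩ | ⟨h1, h2'⟩⟩ := (hadj _ _).mp hA
      · exact nc31 h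
      · exact ne31 h1
      · exact ne30 h1
    · exact iff_of_true ((hadj _ _).mpr ⟨ne32, Or.inl cube32⟩) (by decide)
    · exact iff_of_false (fun hA => ((hadj _ _).mp hA).1 rfl) (by decide)
    · exact iff_of_true ((hadj _ _).mpr ⟨ne34, Or.inl cube34⟩) (by decide)
    · refine iff_of_false (fun hA => ?_) (by decide)
      obtain ⟨hne, h | ⟨h1, h2'⟩ | ⟨h1, h2'⟩⟩ := (hadj _ _).mp hA
      · exact nc35 h
      · exact ne31 h1
      · exact ne30 h1
    · refine iff_of_false (fun hA => ?_) (by decide)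
      obtain ⟨hne, h | ⟨h1, h2'⟩ | ⟨h1, h2'⟩⟩ := (hadj _ _).mp hA
      · exact nc40 h
      · exact ne41 h1
      · exact ne40 h1
    · refine iff_of_false (fun hA => ?_) (by decide)
      obtain ⟨hne, h | ⟨h1, h2'⟩ | ⟨h1, h2'⟩⟩ := (hadj _ _).mp hA
      · exact nc41 h
      · exact ne41 h1
      · exact ne40 h1
    · refine iff_of_false (fun hA => ?_) (by decide)
      obtain ⟨hne, h | ⟨h1, h2'⟩ | ⟨h1, h2'⟩⟩ := (hadj _ _).mp hA
      · exact nc42 h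
      · exact ne41 h1
      · exact ne40 h1
    · exact iff_of_true ((hadj _ _).mpr ⟨ne43, Or.inl cube43⟩) (by decide)
    · exact iff_of_false (fun hA => ((hadj _ _).mp hA).1 rfl) (by decide)
    · exact iff_of_true ((hadj _ _).mpr ⟨ne45, Or.inl cube45⟩) (by decide)
    · refine iff_of_false (fun hA => ?_) (by decide)
      obtain ⟨hne, h | ⟨h1, h2'⟩ | ⟨h1, h2'⟩⟩ := (hadj _ _).mp hA
      · exact nc50 h
      · exact ne51 h1
      · exact ne50 h1
    · refine iff_of_false (fun hA => ?_) (by decide)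
      obtain ⟨hne, h | ⟨h1, h2'⟩ | ⟨h1, h2'⟩⟩ := (hadj _ _).mp hA
      · exact nc51 h
      · exact ne51 h1
      · exact ne50 h1
    · refine iff_of_false (fun hA => ?_) (by decide)
      obtain ⟨hne, h | ⟨h1, h2'⟩ | ⟨h1, h2'⟩⟩ := (hadj _ _).mp hA
      · exact nc52 h
      · exact ne51 h1
      · exact ne50 h1
    · refine iff_of_false (fun hA => ?_) (by decide)
      obtain ⟨hne, h | ⟨h1, h2'⟩ | ⟨h1, h2'⟩⟩ := (hadj _ _).mp hA
      · exact nc53 h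
      · exact ne51 h1
      · exact ne50 h1
    · exact iff_of_true ((hadj _ _).mpr ⟨ne54, Or.inl cube54⟩) (by decide)
    · exact iff_of_false (fun hA => ((hadj _ _).mp hA).1 rfl) (by decide)
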